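/- Let 𝒲 be a set of |T|×|A| real matrices each satisfying W Wᵀ = I, and let M be an |A|×|A| real matrix. Then W* maximizes Σ_{i ≤ j} (W M Wᵀ)²_{i,j} over 𝒲 if and only if (W*, Up(W* M W*ᵀ)) minimizes ‖M − Wᵀ Λ W‖²_F over pairs (W, Λ) with W ∈ 𝒲 and Λ upper-triangular. -/
import Mathlib


open Matrix

/-- The upper-triangular part of a matrix. -/
def Up {T : Type*} [LinearOrder T] (X : Matrix T T ℝ) : Matrix T T ℝ :=
  fun i j => if i ≤ j then X i j else 0

theorem stmt9 {T A : Type*} [Fintype T] [LinearOrder T] [Fintype A] [LinearOrder A]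
    (𝒲 : Set (Matrix T A ℝ)) (h𝒲 : ∀ W ∈ 𝒲, W * Wᵀ = 1)
    (M : Matrix A A ℝ) (Wstar : Matrix T A ℝ) (hWstar : Wstar ∈ 𝒲) :
    (∀ W ∈ 𝒲,
        (∑ i, ∑ j, (if i ≤ j then ((W * M * Wᵀ) i j) ^ 2 else 0)) ≤
          ∑ i, ∑ j, (if i ≤ j then ((Wstar * M * Wstarᵀ) i j) ^ 2 else 0)) ↔
      (∀ W ∈ 𝒲, ∀ Λ : Matrix T T ℝ, (∀ i j, j < i → Λ i j = 0) →
        Matrix.trace ((M - Wstarᵀ * Up (Wstar * M * Wstarᵀ) * Wstar) *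
            (M - Wstarᵀ * Up (Wstar * M * Wstarᵀ) * Wstar)ᵀ) ≤
          Matrix.trace ((M - Wᵀ * Λ * W) * (M - Wᵀ * Λ * W)ᵀ)) := by
  classical
  have tr_eq : ∀ (X Y : Matrix T T ℝ),
      Matrix.trace (X * Yᵀ) = ∑ i, ∑ j, X i j * Y i j := by
    intro X Y
    simp [Matrix.trace, Matrix.mul_apply, Matrix.diag]
  have key : ∀ W ∈ 𝒲, ∀ Λ : Matrix T T ℝ, (∀ i j, j < i → Λ i j = 0) →
      Matrix.trace ((M - Wᵀ * Λ * W) * (M - Wᵀ * Λ * W)ᵀ)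
        = Matrix.trace (M * Mᵀ)
          - (∑ i, ∑ j, (if i ≤ j then ((W * M * Wᵀ) i j) ^ 2 else 0))
          + ∑ i, ∑ j, (Λ i j - Up (W * M * Wᵀ) i j) ^ 2 := by
    intro W hWmem Λ hΛ
    have hW := h𝒲 W hWmem
    have hW' : ∀ X : Matrix T A ℝ, W * (Wᵀ * X) = X := fun X => by
      rw [← Matrix.mul_assoc, hW, Matrix.one_mul]
    set N : Matrix A A ℝ := Wᵀ * Λ * W with hN
    set B : Matrix T T ℝ := W * M * Wᵀ with hB
    have e1 : Matrix.trace (N * Nᵀ) = Matrix.trace (Λ * Λᵀ) := by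
      have h : N * Nᵀ = Wᵀ * (Λ * (Λᵀ * W)) := by
        simp only [hN, transpose_mul, transpose_transpose, Matrix.mul_assoc, hW']
      rw [h, Matrix.trace_mul_comm]
      simp only [Matrix.mul_assoc, hW, Matrix.mul_one]
    have e2 : Matrix.trace (M * Nᵀ) = Matrix.trace (B * Λᵀ) := by
      have h : M * Nᵀ = (M * (Wᵀ * Λᵀ)) * W := by
        simp only [hN, transpose_mul, transpose_transpose, Matrix.mul_assoc]
      rw [h, Matrix.trace_mul_comm]
      simp only [hB, Matrix.mul_assoc]
    have e3 : Matrix.trace (N * Mᵀ) = Matrix.trace (B * Λᵀ) := by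
      rw [← Matrix.trace_transpose (N * Mᵀ), transpose_mul, transpose_transpose]
      exact e2
    have expand : Matrix.trace ((M - N) * (M - N)ᵀ)
        = Matrix.trace (M * Mᵀ) - 2 * Matrix.trace (B * Λᵀ) + Matrix.trace (Λ * Λᵀ) := by
      have h : (M - N) * (M - N)ᵀ = M * Mᵀ - M * Nᵀ - (N * Mᵀ - N * Nᵀ) := by
        simp only [transpose_sub]
        noncomm_ring
      rw [h, Matrix.trace_sub, Matrix.trace_sub, Matrix.trace_sub, e1, e2, e3]
      ring
    rw [expand, tr_eq, tr_eq]
    have pointwise : ∀ i j, Λ i j ^ 2 - 2 * (B i j * Λ i j)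
        = (Λ i j - Up B i j) ^ 2 - (if i ≤ j then (B i j) ^ 2 else 0) := by
      intro i j
      by_cases h : i ≤ j
      · simp only [Up, if_pos h]
        ring
      · simp only [Up, if_neg h, hΛ i j (lt_of_not_ge h)]
        ring
    have sum_eq : ∑ i, ∑ j, (Λ i j ^ 2 - 2 * (B i j * Λ i j))
        = ∑ i, ∑ j, ((Λ i j - Up B i j) ^ 2 - (if i ≤ j then (B i j) ^ 2 else 0)) := by
      refine Finset.sum_congr rfl fun i _ => Finset.sum_congr rfl fun j _ => pointwise i j
    simp only [Finset.sum_sub_distrib, Finset.mul_sum, pow_two] at sum_eq ⊢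
    linarith [sum_eq]
  have hUpTri : ∀ X : Matrix T T ℝ, ∀ i j, j < i → Up X i j = 0 := by
    intro X i j h
    simp [Up, not_le.mpr h]
  have hQzero : ∀ X : Matrix T T ℝ,
      (∑ i, ∑ j, (Up X i j - Up X i j) ^ 2) = 0 := by
    intro X; simp
  constructor
  · intro hmax W hWmem Λ hΛ
    rw [key Wstar hWstar (Up (Wstar * M * Wstarᵀ)) (hUpTri _), key W hWmem Λ hΛ,
      hQzero]
    have h1 := hmax W hWmem
    have h2 : (0:ℝ) ≤ ∑ i, ∑ j, (Λ i j - Up (W * M * Wᵀ) i j) ^ 2 :=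
      Finset.sum_nonneg fun i _ => Finset.sum_nonneg fun j _ => sq_nonneg _
    linarith
  · intro hmin W hWmem
    have h := hmin W hWmem (Up (W * M * Wᵀ)) (hUpTri _)
    rw [key Wstar hWstar (Up (Wstar * M * Wstarᵀ)) (hUpTri _),
      key W hWmem (Up (W * M * Wᵀ)) (hUpTri _), hQzero, hQzero] at h
    linarith
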